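/- Let (M,g) be a complete noncompact Riemannian manifold with a vector field X satisfying Ric_X ≥ ε(n−1) g (ε>0) and Ric ≤ (n−1) g. Then |X(q)| → ∞ as d(p,q) → ∞ for any fixed base point p. -/

import Mathlib

open RealInnerProductSpace

set_option maxHeartbeats 1000000

/-- Corollary 2.3: if `(M,g)` is complete noncompact with
`Ric_X = Ric + (1/2) L_X g ≥ ε(n−1) g` (`ε > 0`) and `Ric ≤ (n−1) g`, then
`|X(q)| → ∞` as `d(p,q) → ∞` for any fixed base point `p`.
The Riemannian data is recorded as follows: `T x` is the tangent space at
`x`, `X` the vector field, and for `p q : M`, `Geo p q` is the set of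
unit-speed minimal geodesics `γ : [0, d(p,q)] → M` from `p` to `q`
(nonempty by completeness and Hopf–Rinow).  Along each such `γ`:
`ric γ t = Ric(γ'(t), γ'(t))` and `xg γ t = g(X(γ(t)), γ'(t))`, with
`γ'(0) = startV γ`, `γ'(d(p,q)) = endV γ` unit vectors;
`hricX` is `Ric_X(γ',γ') ≥ ε(n−1)` via the geodesic identity
`(1/2)(L_X g)(γ',γ') = (d/dt) g(X∘γ, γ')`, `hric_le` is `Ric ≤ (n−1)g`,
and `hminimal` records minimality via nonnegativity of the index form. -/
theorem stmt_6 {M : Type*} [MetricSpace M]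
    {T : M → Type*} [∀ x, NormedAddCommGroup (T x)] [∀ x, InnerProductSpace ℝ (T x)]
    (n : ℕ) (hn : 2 ≤ n) (ε : ℝ) (hε : 0 < ε)
    (X : ∀ x : M, T x)
    (Geo : M → M → Type*)
    (geo_ne : ∀ p q : M, Nonempty (Geo p q))
    (startV : ∀ {p q : M}, Geo p q → T p)
    (endV : ∀ {p q : M}, Geo p q → T q)
    (hstart_unit : ∀ {p q : M} (γ : Geo p q), ‖startV γ‖ = 1)
    (hend_unit : ∀ {p q : M} (γ : Geo p q), ‖endV γ‖ = 1)
    (ric xg : ∀ {p q : M}, Geo p q → ℝ → ℝ)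
    (hxg0 : ∀ {p q : M} (γ : Geo p q), xg γ 0 = ⟪X p, startV γ⟫)
    (hxgd : ∀ {p q : M} (γ : Geo p q), xg γ (dist p q) = ⟪X q, endV γ⟫)
    (hric_cont : ∀ {p q : M} (γ : Geo p q), Continuous (ric γ))
    (hxg_deriv : ∀ {p q : M} (γ : Geo p q) (t : ℝ), HasDerivAt (xg γ) (deriv (xg γ) t) t)
    (hxg_deriv_cont : ∀ {p q : M} (γ : Geo p q), Continuous (deriv (xg γ)))
    (hricX : ∀ {p q : M} (γ : Geo p q), ∀ t ∈ Set.Icc (0 : ℝ) (dist p q),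
      ε * ((n : ℝ) - 1) ≤ ric γ t + deriv (xg γ) t)
    (hric_le : ∀ {p q : M} (γ : Geo p q), ∀ t ∈ Set.Icc (0 : ℝ) (dist p q),
      ric γ t ≤ (n : ℝ) - 1)
    (hminimal : ∀ {p q : M} (γ : Geo p q) (φ : ℝ → ℝ), φ 0 = 0 → φ (dist p q) = 0 →
      (∀ t, DifferentiableAt ℝ φ t) → Continuous (deriv φ) →
      0 ≤ ∫ t in (0 : ℝ)..(dist p q),
        (((n : ℝ) - 1) * (deriv φ t) ^ 2 - (φ t) ^ 2 * ric γ t))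
    (p : M) :
    ∀ C : ℝ, ∃ R : ℝ, ∀ q : M, R < dist p q → C < ‖X q‖ := by
  intro C
  refine ⟨max 0 ((C + ‖X p‖ + 6 * ((n : ℝ) - 1)) / (ε * ((n : ℝ) - 1))), fun q hq => ?_⟩
  set d := dist p q with hdd
  have hn1 : (1 : ℝ) ≤ (n : ℝ) - 1 := by
    have : (2 : ℝ) ≤ (n : ℝ) := by exact_mod_cast hn
    linarith
  have hεn : 0 < ε * ((n : ℝ) - 1) := by positivity
  have hd0 : (0 : ℝ) < d := lt_of_le_of_lt (le_max_left _ _) hq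
  obtain ⟨γ⟩ := geo_ne p q
  set φ : ℝ → ℝ := fun t => 1 - Real.exp (-t) - Real.exp (t - d) + Real.exp (-d) with hφ
  set ψ : ℝ → ℝ := fun t => Real.exp (-t) - Real.exp (t - d) with hψ
  have hderiv : ∀ t, HasDerivAt φ (ψ t) t := by
    intro t
    have h1 : HasDerivAt (fun t : ℝ => Real.exp (-t)) (-Real.exp (-t)) t := by
      simpa [Function.comp_def] using ((Real.hasDerivAt_exp (-t)).comp t (hasDerivAt_neg t))
    have h2 : HasDerivAt (fun t : ℝ => Real.exp (t - d)) (Real.exp (t - d)) t := by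
      simpa [Function.comp_def] using ((Real.hasDerivAt_exp (t - d)).comp t ((hasDerivAt_id t).sub_const d))
    have := ((h1.const_sub 1).sub h2).add_const (Real.exp (-d))
    simpa [hφ, hψ, sub_eq_add_neg] using this
  have hdφ : deriv φ = ψ := funext fun t => (hderiv t).deriv
  have hφc : Continuous φ := by fun_prop
  have hψc : Continuous ψ := by fun_prop
  have hmin := hminimal γ φ (by simp [hφ]) (by simp only [hφ, ← hdd, sub_self, Real.exp_zero]; ring) (fun t => (hderiv t).differentiableAt)
    (by rw [hdφ]; exact hψc)
  rw [hdφ] at hmin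
  -- bounds on exp on [0, d]
  have hexp_le : ∀ t ∈ Set.Icc (0 : ℝ) d, Real.exp (-t) ≤ 1 ∧ Real.exp (t - d) ≤ 1 := by
    intro t ht
    constructor
    · exact Real.exp_le_one_iff.mpr (by linarith [ht.1])
    · exact Real.exp_le_one_iff.mpr (by linarith [ht.2])
  -- integrability
  have iψ2 : IntervalIntegrable (fun t => ψ t ^ 2) MeasureTheory.volume 0 d :=
    (hψc.pow 2).intervalIntegrable 0 d
  have iric : IntervalIntegrable (ric γ) MeasureTheory.volume 0 d :=
    (hric_cont γ).intervalIntegrable 0 d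
  have iφ2r : IntervalIntegrable (fun t => φ t ^ 2 * ric γ t) MeasureTheory.volume 0 d :=
    ((hφc.pow 2).mul (hric_cont γ)).intervalIntegrable 0 d
  have inψ2 : IntervalIntegrable (fun t => ((n : ℝ) - 1) * ψ t ^ 2) MeasureTheory.volume 0 d :=
    (continuous_const.mul (hψc.pow 2)).intervalIntegrable 0 d
  have ixg : IntervalIntegrable (deriv (xg γ)) MeasureTheory.volume 0 d :=
    (hxg_deriv_cont γ).intervalIntegrable 0 d
  -- ∫ ψ^2 ≤ 1
  have hB1 : (∫ t in (0 : ℝ)..d, (Real.exp (-(2 * t)) + Real.exp (2 * (t - d))))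
      = (1 - Real.exp (-(2 * d))) := by
    have hH : ∀ t ∈ Set.uIcc (0 : ℝ) d, HasDerivAt
        (fun t : ℝ => -(1 / 2) * Real.exp (-(2 * t)) + (1 / 2) * Real.exp (2 * (t - d)))
        (Real.exp (-(2 * t)) + Real.exp (2 * (t - d))) t := by
      intro t _
      have h1 : HasDerivAt (fun t : ℝ => Real.exp (-(2 * t))) (Real.exp (-(2 * t)) * (-2)) t := by
        have := (Real.hasDerivAt_exp (-(2 * t))).comp t ((hasDerivAt_id t).const_mul (2 : ℝ)).neg
        exact this.congr_deriv (by ring)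
      have h2 : HasDerivAt (fun t : ℝ => Real.exp (2 * (t - d))) (Real.exp (2 * (t - d)) * 2) t := by
        have := (Real.hasDerivAt_exp (2 * (t - d))).comp t (((hasDerivAt_id t).sub_const d).const_mul (2 : ℝ))
        exact this.congr_deriv (by ring)
      have := (h1.const_mul (-(1 / 2) : ℝ)).add (h2.const_mul ((1 / 2) : ℝ))
      exact this.congr_deriv (by ring)
    rw [intervalIntegral.integral_eq_sub_of_hasDerivAt hH
      ((by fun_prop : Continuous fun t : ℝ =>
        Real.exp (-(2 * t)) + Real.exp (2 * (t - d))).intervalIntegrable 0 d)]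
    simp
    ring
  have hψ2le : (∫ t in (0 : ℝ)..d, ψ t ^ 2) ≤ 1 := by
    have hmono : (∫ t in (0 : ℝ)..d, ψ t ^ 2)
        ≤ ∫ t in (0 : ℝ)..d, (Real.exp (-(2 * t)) + Real.exp (2 * (t - d))) := by
      apply intervalIntegral.integral_mono_on hd0.le iψ2
        ((by fun_prop : Continuous fun t : ℝ =>
          Real.exp (-(2 * t)) + Real.exp (2 * (t - d))).intervalIntegrable 0 d)
      intro t ht
      have e1 : Real.exp (-t) ^ 2 = Real.exp (-(2 * t)) := by
        rw [sq, ← Real.exp_add]; ring_nf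
      have e2 : Real.exp (t - d) ^ 2 = Real.exp (2 * (t - d)) := by
        rw [sq, ← Real.exp_add]; ring_nf
      have hpos : (0 : ℝ) < Real.exp (-t) * Real.exp (t - d) :=
        mul_pos (Real.exp_pos _) (Real.exp_pos _)
      simp only [hψ]
      nlinarith [hpos]
    have : (1 : ℝ) - Real.exp (-(2 * d)) ≤ 1 := by linarith [Real.exp_pos (-(2 * d))]
    linarith [hB1 ▸ hmono]
  -- ∫ φ^2 ric ≤ (n-1)
  have hstep1 : (∫ t in (0 : ℝ)..d, φ t ^ 2 * ric γ t) ≤ ((n : ℝ) - 1) := by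
    have h := hmin
    rw [intervalIntegral.integral_sub inψ2 iφ2r, sub_nonneg] at h
    have : (∫ t in (0 : ℝ)..d, ((n : ℝ) - 1) * ψ t ^ 2)
        = ((n : ℝ) - 1) * ∫ t in (0 : ℝ)..d, ψ t ^ 2 :=
      intervalIntegral.integral_const_mul _ _
    nlinarith [hψ2le, h]
  -- ∫ (ric - φ^2 ric) ≤ 4 (n-1)
  have hB2 : (∫ t in (0 : ℝ)..d, ((n : ℝ) - 1) * (2 * (Real.exp (-t) + Real.exp (t - d))))
      ≤ 4 * ((n : ℝ) - 1) := by
    have hH : ∀ t ∈ Set.uIcc (0 : ℝ) d, HasDerivAt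
        (fun t : ℝ => -Real.exp (-t) + Real.exp (t - d))
        (Real.exp (-t) + Real.exp (t - d)) t := by
      intro t _
      have h1 : HasDerivAt (fun t : ℝ => Real.exp (-t)) (-Real.exp (-t)) t := by
        simpa [Function.comp_def] using ((Real.hasDerivAt_exp (-t)).comp t (hasDerivAt_neg t))
      have h2 : HasDerivAt (fun t : ℝ => Real.exp (t - d)) (Real.exp (t - d)) t := by
        simpa [Function.comp_def] using ((Real.hasDerivAt_exp (t - d)).comp t ((hasDerivAt_id t).sub_const d))
      exact (h1.neg.add h2).congr_deriv (by ring)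
    have hval : (∫ t in (0 : ℝ)..d, (Real.exp (-t) + Real.exp (t - d)))
        = 2 - 2 * Real.exp (-d) := by
      rw [intervalIntegral.integral_eq_sub_of_hasDerivAt hH
        ((by fun_prop : Continuous fun t : ℝ =>
          Real.exp (-t) + Real.exp (t - d)).intervalIntegrable 0 d)]
      simp
      ring
    have hc : (∫ t in (0 : ℝ)..d, ((n : ℝ) - 1) * (2 * (Real.exp (-t) + Real.exp (t - d))))
        = (((n : ℝ) - 1) * 2) * ∫ t in (0 : ℝ)..d, (Real.exp (-t) + Real.exp (t - d)) := by
      rw [← intervalIntegral.integral_const_mul]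
      congr 1; funext t; ring
    rw [hc, hval]
    nlinarith [Real.exp_pos (-d)]
  have hstep2 : (∫ t in (0 : ℝ)..d, (ric γ t - φ t ^ 2 * ric γ t)) ≤ 4 * ((n : ℝ) - 1) := by
    refine le_trans ?_ hB2
    apply intervalIntegral.integral_mono_on hd0.le (iric.sub iφ2r)
      ((by fun_prop : Continuous fun t : ℝ =>
        ((n : ℝ) - 1) * (2 * (Real.exp (-t) + Real.exp (t - d)))).intervalIntegrable 0 d)
    intro t ht
    obtain ⟨ha, hb⟩ := hexp_le t ht
    have hap := Real.exp_pos (-t)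
    have hbp := Real.exp_pos (t - d)
    have hdp := Real.exp_pos (-d)
    have habd : Real.exp (-t) * Real.exp (t - d) = Real.exp (-d) := by
      rw [← Real.exp_add]; ring_nf
    -- 0 ≤ φ t ≤ 1 and 1 - φ t ≤ exp(-t) + exp(t-d)
    have hφ01 : 0 ≤ φ t ∧ φ t ≤ 1 := by
      constructor <;> (simp only [hφ]; nlinarith)
    have h1φ : 1 - φ t ^ 2 ≤ 2 * (Real.exp (-t) + Real.exp (t - d)) := by
      have : 1 - φ t ≤ Real.exp (-t) + Real.exp (t - d) := by
        simp only [hφ]; nlinarith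
      nlinarith [hφ01.1, hφ01.2]
    have hr := hric_le γ t ht
    calc ric γ t - φ t ^ 2 * ric γ t = (1 - φ t ^ 2) * ric γ t := by ring
      _ ≤ (1 - φ t ^ 2) * ((n : ℝ) - 1) := by
          apply mul_le_mul_of_nonneg_left hr
          nlinarith [hφ01.1, hφ01.2]
      _ ≤ (2 * (Real.exp (-t) + Real.exp (t - d))) * ((n : ℝ) - 1) := by
          apply mul_le_mul_of_nonneg_right h1φ; linarith
      _ = ((n : ℝ) - 1) * (2 * (Real.exp (-t) + Real.exp (t - d))) := by ring
  -- total: ∫ ric ≤ 5 (n-1)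
  have hric_total : (∫ t in (0 : ℝ)..d, ric γ t) ≤ 5 * ((n : ℝ) - 1) := by
    have := intervalIntegral.integral_sub iric iφ2r
    have h := hstep2
    rw [this] at h
    linarith [hstep1]
  -- FTC for xg
  have hftc : (∫ t in (0 : ℝ)..d, deriv (xg γ) t) = xg γ d - xg γ 0 :=
    intervalIntegral.integral_eq_sub_of_hasDerivAt (fun t _ => hxg_deriv γ t) ixg
  -- lower bound from Ric_X
  have hlow : ε * ((n : ℝ) - 1) * d ≤ (∫ t in (0 : ℝ)..d, (ric γ t + deriv (xg γ) t)) := by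
    have := intervalIntegral.integral_mono_on hd0.le
      (intervalIntegrable_const (c := ε * ((n : ℝ) - 1))) (iric.add ixg)
      (fun t ht => hricX γ t ht)
    rw [intervalIntegral.integral_const, smul_eq_mul] at this
    calc ε * ((n : ℝ) - 1) * d = (d - 0) * (ε * ((n : ℝ) - 1)) := by ring
      _ ≤ _ := this
  rw [intervalIntegral.integral_add iric ixg, hftc] at hlow
  -- endpoint estimates
  have hs : -‖X p‖ ≤ xg γ 0 := by
    rw [hxg0 γ]
    have := abs_real_inner_le_norm (X p) (startV γ)
    rw [hstart_unit γ, mul_one] at this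
    cases abs_le.mp this with
    | intro h1 h2 => linarith
  have he : xg γ d ≤ ‖X q‖ := by
    rw [hxgd γ]
    have := real_inner_le_norm (X q) (endV γ)
    rwa [hend_unit γ, mul_one] at this
  -- conclude
  have hR : (C + ‖X p‖ + 6 * ((n : ℝ) - 1)) / (ε * ((n : ℝ) - 1)) < d :=
    lt_of_le_of_lt (le_max_right _ _) hq
  have : C + ‖X p‖ + 6 * ((n : ℝ) - 1) < ε * ((n : ℝ) - 1) * d := by
    rw [div_lt_iff₀ hεn] at hR
    nlinarith [hR]
  linarith
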